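/- Let V be a poset of dimension at most 2 with a unique maximal node m, and suppose V is simple in the sense that Λ_V (the set of height-one elements of 𝓗_V* together with elements of 𝓗_V* above which no height-one element of 𝓗_V* lies, where 𝓗_V* consists of the minimal nodes and the height-one nodes dominating at least two minimal nodes, with m removed) is a singleton. If dim V = 1, then V has exactly one minimal element. -/

import Mathlib

/-- A simple poset (with `Λ_V` a singleton) of dimension 1 with a unique maximal node has
exactly one minimal element. -/
theorem simple_dim_one_unique_min {V : Type*} [PartialOrder V] (m : V)
    (hdim2 : Order.krullDim V ≤ 2)
    (hmax : IsMax m) (huniq : ∀ x : V, IsMax x → x = m)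
    (H Λ : Set V)
    (hH : H = {v : V | v ≠ m ∧ (IsMin v ∨ (Order.height v = 1 ∧
      ∃ a b : V, IsMin a ∧ IsMin b ∧ a ≠ b ∧ a ≤ v ∧ b ≤ v))})
    (hΛ : Λ = {v ∈ H | Order.height v = 1 ∨ ∀ h ∈ H, Order.height h = 1 → ¬ v ≤ h})
    (hsimple : ∃ q : V, Λ = {q})
    (hdim : Order.krullDim V = 1) :
    ∃! t : V, IsMin t := by
  -- No chain of length 2
  have nochain : ∀ a b c : V, a < b → b < c → False := by
    intro a b c hab hbc
    have := Order.LTSeries.length_le_krullDim (((RelSeries.singleton _ a).snoc b hab).snoc c (by exact hbc))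
    rw [hdim] at this
    simp [RelSeries.snoc, RelSeries.append] at this
  -- Every element ≠ m is minimal
  have hmin : ∀ v : V, v ≠ m → IsMin v := by
    intro v hv u hu
    by_contra h
    have huv : u < v := lt_of_le_not_ge hu h
    have hvmax : ¬ IsMax v := fun h => hv (huniq v h)
    obtain ⟨w, hw⟩ := not_isMax_iff.mp hvmax
    exact (nochain u v w huv hw).elim
  -- H = Λ and everything in H is minimal
  have hHmin : ∀ h ∈ H, IsMin h ∧ h ≠ m := by
    intro h hh
    rw [hH] at hh
    exact ⟨hmin h hh.1, hh.1⟩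
  have hsub : H ⊆ Λ := by
    intro v hv
    rw [hΛ]
    refine ⟨hv, Or.inr fun h hh hht _ => ?_⟩
    have := Order.height_eq_zero.mpr (hHmin h hh).1
    rw [hht] at this
    exact one_ne_zero this
  obtain ⟨q, hq⟩ := hsimple
  have hqΛ : q ∈ Λ := by rw [hq]; rfl
  have hqH : q ∈ H := by rw [hΛ] at hqΛ; exact hqΛ.1
  have hqmin : IsMin q := (hHmin q hqH).1
  have hqm : q ≠ m := (hHmin q hqH).2
  refine ⟨q, hqmin, fun t ht => ?_⟩
  by_cases htm : t = m
  · -- then m is minimal, but q < m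
    exfalso
    have hqmax : ¬ IsMax q := fun h => hqm (huniq q h)
    obtain ⟨w, hw⟩ := not_isMax_iff.mp hqmax
    have hwm : w = m := by
      apply huniq
      intro u hu
      by_contra h
      exact nochain q w u hw (lt_of_le_not_ge hu h)
    rw [hwm] at hw
    rw [htm] at ht
    exact absurd (ht hw.le) (not_le_of_gt hw)
  · have htH : t ∈ H := by rw [hH]; exact ⟨htm, Or.inl ht⟩
    have : t ∈ Λ := hsub htH
    rw [hq] at this
    exact this
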